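/- Let m = n + k. Let L ∈ ℂ^{m×m} be a proper unitary k-lower Hessenberg matrix, R ∈ ℂ^{m×m} a unitary k-upper Hessenberg matrix, Z ∈ ℂ^{m×k}, and E = [I_k; 0] ∈ ℂ^{m×k}. If Â = L (I + E Z*) R has its last k rows equal to zero, then Â is upper triangular. -/
import Mathlib


open Matrix

/-- A matrix is `k`-upper Hessenberg if its entries vanish below the `k`-th subdiagonal. -/
def IsKUpperHessenberg {m : ℕ} (k : ℕ) (R : Matrix (Fin m) (Fin m) ℂ) : Prop :=
  ∀ i j : Fin m, (j : ℕ) + k < (i : ℕ) → R i j = 0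

/-- A matrix is `k`-lower Hessenberg if its entries vanish above the `k`-th superdiagonal. -/
def IsKLowerHessenberg {m : ℕ} (k : ℕ) (L : Matrix (Fin m) (Fin m) ℂ) : Prop :=
  ∀ i j : Fin m, (i : ℕ) + k < (j : ℕ) → L i j = 0

/-- If `Â = L (I + E Z*) R` with `L` a proper unitary `k`-lower Hessenberg matrix, `R` a
unitary `k`-upper Hessenberg matrix, `E = [I_k; 0]`, and the last `k` rows of `Â` vanish,
then `Â` is upper triangular. -/
theorem bordered_LFR_identity_is_triangular {n k : ℕ} (hk : 1 ≤ k)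
    (L R Ahat : Matrix (Fin (n + k)) (Fin (n + k)) ℂ)
    (Z : Matrix (Fin (n + k)) (Fin k) ℂ)
    (hL : L ∈ Matrix.unitaryGroup (Fin (n + k)) ℂ)
    (hLHess : IsKLowerHessenberg k L)
    (hLproper : ∀ (j : ℕ) (h : j + k < n + k), L ⟨j, by omega⟩ ⟨j + k, h⟩ ≠ 0)
    (hR : R ∈ Matrix.unitaryGroup (Fin (n + k)) ℂ)
    (hRHess : IsKUpperHessenberg k R)
    (hAhat : Ahat = L * (1 + (Matrix.of fun (i : Fin (n + k)) (j : Fin k) =>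
      if (i : ℕ) = (j : ℕ) then (1 : ℂ) else 0) * Zᴴ) * R)
    (hlast : ∀ (i j : Fin (n + k)), n ≤ (i : ℕ) → Ahat i j = 0) :
    ∀ i j : Fin (n + k), (j : ℕ) < (i : ℕ) → Ahat i j = 0 := by
  set M : Matrix (Fin (n + k)) (Fin (n + k)) ℂ :=
    1 + (Matrix.of fun (i : Fin (n + k)) (j : Fin k) =>
      if (i : ℕ) = (j : ℕ) then (1 : ℂ) else 0) * Zᴴ with hMdef
  -- B := M * R equals Lᴴ * Ahat
  have hB : Lᴴ * Ahat = M * R := by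
    rw [hAhat, mul_assoc L M R, ← mul_assoc Lᴴ L (M * R),
      ← Matrix.star_eq_conjTranspose, hL.1, one_mul]
  -- B is k-upper Hessenberg
  have hBspec : ∀ p j : Fin (n + k), (j : ℕ) + k < (p : ℕ) → (M * R) p j = 0 := by
    intro p j hpj
    have hMrow : ∀ s : Fin (n + k), M p s = if p = s then (1 : ℂ) else 0 := by
      intro s
      have h2 : ((Matrix.of fun (i : Fin (n + k)) (j : Fin k) =>
          if (i : ℕ) = (j : ℕ) then (1 : ℂ) else 0) * Zᴴ) p s = 0 := by
        rw [Matrix.mul_apply]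
        apply Finset.sum_eq_zero
        intro q _
        have : ¬ ((p : ℕ) = (q : ℕ)) := by
          have := q.isLt
          omega
        simp [this]
      simp [hMdef, Matrix.add_apply, h2, Matrix.one_apply]
    have : (M * R) p j = R p j := by
      rw [Matrix.mul_apply]
      rw [Finset.sum_eq_single p]
      · rw [hMrow]; simp
      · intro b _ hb
        rw [hMrow]
        simp [Ne.symm hb]
      · intro h; exact absurd (Finset.mem_univ p) h
    rw [this]
    exact hRHess p j hpj
  suffices H : ∀ d (i j : Fin (n + k)), n + k ≤ (i : ℕ) + d → (j : ℕ) < (i : ℕ) →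
      Ahat i j = 0 by
    intro i j hij
    exact H (n + k) i j (by omega) hij
  intro d
  induction d with
  | zero =>
    intro i j h1 _
    exact absurd i.isLt (by omega)
  | succ d ih =>
    intro i j h1 h2
    by_cases hn : n ≤ (i : ℕ)
    · exact hlast i j hn
    · push_neg at hn
      have hp : (i : ℕ) + k < n + k := by omega
      set p : Fin (n + k) := ⟨(i : ℕ) + k, hp⟩ with hpdef
      have hB0 : (M * R) p j = 0 := hBspec p j (by simp [hpdef]; omega)
      rw [← hB] at hB0
      have hsum : (Lᴴ * Ahat) p j = (starRingEnd ℂ) (L i p) * Ahat i j := by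
        rw [Matrix.mul_apply]
        rw [Finset.sum_eq_single i]
        · rw [Matrix.conjTranspose_apply]; rfl
        · intro b _ hb
          rcases lt_or_gt_of_ne (fun h : (b : ℕ) = (i : ℕ) => hb (Fin.ext h)) with hlt | hgt
          · have : L b p = 0 := hLHess b p (by simp [hpdef]; omega)
            rw [Matrix.conjTranspose_apply, this]
            simp
          · have : Ahat b j = 0 := ih b j (by omega) (by omega)
            rw [this, mul_zero]
        · intro h; exact absurd (Finset.mem_univ i) h
      rw [hsum] at hB0
      have hne : (starRingEnd ℂ) (L i p) ≠ 0 := by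
        rw [starRingEnd_apply, star_ne_zero]
        exact hLproper (i : ℕ) hp
      exact (mul_eq_zero.mp hB0).resolve_left hne
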